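/- Let A be a commutative algebra and I an abstract continuity ideal in A. Let 𝔓_0 be the set of minimal elements among the prime ideals of the form (I : a), a ∈ A. Then 𝔓_0 is a relatively compact family of prime ideals: every sequence in 𝔓_0 has a pseudo-finite subsequence. -/
import Mathlib


/-- The quotient ideal `(J : a) = {x | a * x ∈ J}`. -/
def quotIdeal {A : Type*} [CommRing A] (J : Ideal A) (a : A) : Ideal A where
  carrier := {x | a * x ∈ J}
  zero_mem' := by simp
  add_mem' := by
    intro x y hx hy
    simpa [mul_add] using J.add_mem hx hy
  smul_mem' := by
    intro c x hx
    simp only [smul_eq_mul, Set.mem_setOf_eq, mul_left_comm a c x] at *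
    exact J.mul_mem_left c hx

/-- An ideal `I` is an abstract continuity ideal if for every sequence
`(a n)` the increasing chain of quotient ideals eventually stabilizes. -/
def AbstractContinuityIdeal {A : Type*} [CommRing A] (I : Ideal A) : Prop :=
  ∀ a : ℕ → A, ∃ n₀ : ℕ, ∀ n ≥ n₀,
    quotIdeal I (∏ i ∈ Finset.range n, a i) =
      quotIdeal I (∏ i ∈ Finset.range (n + 1), a i)

/-- A sequence of ideals is pseudo-finite if every element of the union lies in
all but finitely many of them. -/
def PseudoFinite {A : Type*} [CommRing A] (P : ℕ → Ideal A) : Prop :=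
  ∀ a : A, (∃ n, a ∈ P n) → {n | a ∉ P n}.Finite

lemma mem_quotIdeal {A : Type*} [CommRing A] {J : Ideal A} {a x : A} :
    x ∈ quotIdeal J a ↔ a * x ∈ J := Iff.rfl

/-- Auxiliary extraction lemma: if every infinite set `M` admits an `a` whose
"trace" `T a` meets `M` but misses an infinite part of `M`, then we can build
sequences `a k`, `m k` with `m k ∈ T (a k)` and `m k ∉ T (a j)` for `j < k`. -/
lemma exists_bad_seq {α : Type*} (T : α → Set ℕ)
    (h : ∀ M : Set ℕ, M.Infinite → ∃ a : α, ∃ m ∈ M, m ∈ T a ∧ (M \ T a).Infinite) :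
    ∃ (a : ℕ → α) (m : ℕ → ℕ), ∀ k, m k ∈ T (a k) ∧ ∀ j < k, m k ∉ T (a j) := by
  choose f mf hmf1 hmf2 hmf3 using h
  let F : ℕ → {M : Set ℕ // M.Infinite} := fun k =>
    Nat.rec ⟨Set.univ, Set.infinite_univ⟩
      (fun _ prev => ⟨prev.1 \ T (f prev.1 prev.2), hmf3 prev.1 prev.2⟩) k
  have hFsucc : ∀ k, (F (k + 1)).1 = (F k).1 \ T (f (F k).1 (F k).2) := fun k => rfl
  refine ⟨fun k => f (F k).1 (F k).2, fun k => mf (F k).1 (F k).2, fun k => ?_⟩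
  have hsub : ∀ j k, j ≤ k → (F k).1 ⊆ (F j).1 := by
    intro j k hjk
    induction k with
    | zero => simp_all
    | succ k ih =>
      rcases Nat.lt_or_ge j (k + 1) with h' | h'
      · exact fun x hx => ih (Nat.lt_succ_iff.mp h') ((hFsucc k ▸ hx).1)
      · have : j = k + 1 := le_antisymm hjk h'
        subst this; exact fun x hx => hx
  refine ⟨hmf2 _ _, fun j hj hmem => ?_⟩
  have hmk : mf (F k).1 (F k).2 ∈ (F (j + 1)).1 :=
    hsub (j + 1) k hj (hmf1 (F k).1 (F k).2)
  rw [hFsucc j] at hmk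
  exact hmk.2 hmem

lemma prod_not_mem_prime {A : Type*} [CommRing A] {P : Ideal A} (hP : P.IsPrime)
    {k : ℕ} {a : ℕ → A} (h : ∀ j < k, a j ∉ P) :
    (∏ i ∈ Finset.range k, a i) ∉ P := by
  intro hmem
  rcases (Ideal.IsPrime.prod_mem_iff (hp := hP)).mp hmem with ⟨i, hi, hiP⟩
  exact h i (Finset.mem_range.mp hi) hiP

/-- Let `I` be an abstract continuity ideal and let `𝔓₀` be the set of
minimal elements among the prime ideals of the form `(I : a)`. Then `𝔓₀` is
a relatively compact family: every sequence in `𝔓₀` has a pseudo-finite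
subsequence. -/
theorem minimal_primes_relatively_compact {A : Type*} [CommRing A]
    (I : Ideal A) (hI : AbstractContinuityIdeal I)
    (𝔓₀ : Set (Ideal A))
    (h𝔓₀ : 𝔓₀ = {P | (∃ a : A, P = quotIdeal I a) ∧ P.IsPrime ∧
      ∀ Q : Ideal A, (∃ b : A, Q = quotIdeal I b) → Q.IsPrime → Q ≤ P → Q = P}) :
    ∀ P : ℕ → Ideal A, (∀ n, P n ∈ 𝔓₀) →
      ∃ φ : ℕ → ℕ, StrictMono φ ∧ PseudoFinite (fun n => P (φ n)) := by
  intro P hP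
  have hb : ∀ n, ∃ c : A, P n = quotIdeal I c := fun n => (h𝔓₀ ▸ hP n).1
  have hprime : ∀ n, (P n).IsPrime := fun n => (h𝔓₀ ▸ hP n).2.1
  choose b hbP using hb
  by_contra hcon
  push_neg at hcon
  -- Step: every infinite set of indices contains a "bad" element.
  have step : ∀ M : Set ℕ, M.Infinite →
      ∃ a : A, ∃ m ∈ M, m ∈ {n | a ∈ P n} ∧ (M \ {n | a ∈ P n}).Infinite := by
    intro M hM
    have hM' : (setOf (· ∈ M)).Infinite := hM
    have hmono : StrictMono (Nat.nth (· ∈ M)) := Nat.nth_strictMono hM'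
    have hnpf := hcon (Nat.nth (· ∈ M)) hmono
    rw [PseudoFinite] at hnpf
    push_neg at hnpf
    obtain ⟨a, ⟨k₀, hk₀⟩, hinf⟩ := hnpf
    refine ⟨a, Nat.nth (· ∈ M) k₀, Nat.nth_mem_of_infinite hM' k₀, hk₀, ?_⟩
    have himg : (Nat.nth (· ∈ M)) '' {n | a ∉ P (Nat.nth (· ∈ M) n)}
        ⊆ M \ {n | a ∈ P n} := by
      rintro x ⟨y, hy, rfl⟩
      exact ⟨Nat.nth_mem_of_infinite hM' y, hy⟩
    exact Set.Infinite.mono himg (Set.Infinite.image hmono.injective.injOn hinf)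
  obtain ⟨a, m, hm⟩ := exists_bad_seq (fun a => {n | a ∈ P n}) step
  obtain ⟨n₀, hn₀⟩ := hI a
  have hstab := hn₀ n₀ le_rfl
  -- The element `b (m n₀)` witnesses strict increase, contradiction.
  have hmem : b (m n₀) ∈ quotIdeal I (∏ i ∈ Finset.range (n₀ + 1), a i) := by
    rw [mem_quotIdeal, Finset.prod_range_succ]
    have h1 : a n₀ ∈ quotIdeal I (b (m n₀)) := hbP (m n₀) ▸ (hm n₀).1
    rw [mem_quotIdeal] at h1
    have : (∏ i ∈ Finset.range n₀, a i) * (b (m n₀) * a n₀) ∈ I :=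
      I.mul_mem_left _ h1
    convert this using 1
    ring
  have hnot : b (m n₀) ∉ quotIdeal I (∏ i ∈ Finset.range n₀, a i) := by
    intro hin
    rw [mem_quotIdeal] at hin
    have hprod : (∏ i ∈ Finset.range n₀, a i) ∈ quotIdeal I (b (m n₀)) := by
      rw [mem_quotIdeal]
      convert hin using 1
      ring
    rw [← hbP (m n₀)] at hprod
    exact prod_not_mem_prime (hprime (m n₀))
      (fun j hj => (hm n₀).2 j hj) hprod
  rw [hstab] at hnot
  exact hnot hmem
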